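/- Let Δ ⊂ ℝⁿ be an n-dimensional simple polytope with facets F_1,…,F_N and suppose the facets F_{i_1},…,F_{i_k} have empty intersection. Then the k-th mixed partial derivative ∂_{i_1}⋯∂_{i_k} of the volume V(κ) of Δ(κ) with respect to the support numbers κ_{i_1},…,κ_{i_k} vanishes identically on the chamber C_Δ. -/

import Mathlib

open MeasureTheory Function Set

noncomputable section

namespace MassLinearPaper

def dotp {n : ℕ} (v x : Fin n → ℝ) : ℝ := ∑ j, v j * x j

def polytope {n N : ℕ} (η : Fin N → Fin n → ℝ) (κ : Fin N → ℝ) : Set (Fin n → ℝ) :=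
  {x | ∀ i, dotp (η i) x ≤ κ i}

def facet {n N : ℕ} (η : Fin N → Fin n → ℝ) (κ : Fin N → ℝ) (i : Fin N) : Set (Fin n → ℝ) :=
  {x ∈ polytope η κ | dotp (η i) x = κ i}

/-- A polytope is simple if at each point the active conormals are linearly independent. -/
def IsSimplePoly {n N : ℕ} (η : Fin N → Fin n → ℝ) (κ : Fin N → ℝ) : Prop :=
  ∀ x ∈ polytope η κ,
    LinearIndependent ℝ (fun i : {i : Fin N // dotp (η i) x = κ i} => η i.1)

/-- Two support vectors give analogous polytopes: the same collections of facets intersect. -/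
def Analogous {n N : ℕ} (η : Fin N → Fin n → ℝ) (κ κ' : Fin N → ℝ) : Prop :=
  ∀ I : Finset (Fin N),
    (⋂ i ∈ I, facet η κ' i).Nonempty ↔ (⋂ i ∈ I, facet η κ i).Nonempty

/-- The chamber of Δ(κ). -/
def chamber {n N : ℕ} (η : Fin N → Fin n → ℝ) (κ : Fin N → ℝ) : Set (Fin N → ℝ) :=
  connectedComponentIn {κ' | IsSimplePoly η κ' ∧ Analogous η κ κ'} κ

/-- Standing hypotheses: simple, bounded, nonempty interior, all facets nonempty. -/
def GoodPolytope {n N : ℕ} (η : Fin N → Fin n → ℝ) (κ : Fin N → ℝ) : Prop :=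
  IsSimplePoly η κ ∧ Bornology.IsBounded (polytope η κ) ∧
    (interior (polytope η κ)).Nonempty ∧ ∀ i, (facet η κ i).Nonempty

/-- The center of mass of Δ(κ). -/
def centroid {n N : ℕ} (η : Fin N → Fin n → ℝ) (κ : Fin N → ℝ) : Fin n → ℝ :=
  ⨍ x in polytope η κ, x

/-- The volume of Δ(κ) as a function of κ. -/
def volFn {n N : ℕ} (η : Fin N → Fin n → ℝ) : (Fin N → ℝ) → ℝ :=
  fun κ => (volume (polytope η κ)).toReal

/-- Partial derivative with respect to the i-th support number. -/
def pd {N : ℕ} (i : Fin N) (f : (Fin N → ℝ) → ℝ) : (Fin N → ℝ) → ℝ :=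
  fun κ => fderiv ℝ f κ (Pi.single i 1)

def face {n N : ℕ} (η : Fin N → Fin n → ℝ) (κ : Fin N → ℝ) (S : Finset (Fin N)) :
    Set (Fin n → ℝ) :=
  ⋂ i ∈ S, facet η κ i

/-- Centroid of a face with respect to Hausdorff measure of the appropriate dimension. -/
def faceCentroid {n N : ℕ} (η : Fin N → Fin n → ℝ) (κ : Fin N → ℝ) (S : Finset (Fin N)) :
    Fin n → ℝ :=
  ⨍ x in face η κ S, x ∂(μH[(n : ℝ) - S.card])

/-- The facet `F i` is H-symmetric: `⟨H, c(κ)⟩` does not depend on `κ i` on the chamber. -/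
def SymmFacet {n N : ℕ} (η : Fin N → Fin n → ℝ) (κ : Fin N → ℝ) (H : Fin n → ℝ)
    (i : Fin N) : Prop :=
  ∀ κ₁ ∈ chamber η κ, ∀ κ₂ ∈ chamber η κ, (∀ j, j ≠ i → κ₁ j = κ₂ j) →
    dotp H (centroid η κ₁) = dotp H (centroid η κ₂)

/-- H is mass linear with coefficients γ and constant C. -/
def MassLinear {n N : ℕ} (η : Fin N → Fin n → ℝ) (κ : Fin N → ℝ) (H : Fin n → ℝ)
    (γ : Fin N → ℝ) (C : ℝ) : Prop :=
  ∀ κ' ∈ chamber η κ, dotp H (centroid η κ') = ∑ i, γ i * κ' i + C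

/-- A facet is pervasive if it meets every other facet. -/
def Pervasive {n N : ℕ} (η : Fin N → Fin n → ℝ) (κ : Fin N → ℝ) (i : Fin N) : Prop :=
  ∀ j, j ≠ i → (facet η κ i ∩ facet η κ j).Nonempty

/-- A facet is flat if the conormals of all other facets meeting it lie in a hyperplane. -/
def FlatFacet {n N : ℕ} (η : Fin N → Fin n → ℝ) (κ : Fin N → ℝ) (i : Fin N) : Prop :=
  ∃ ξ : Fin n → ℝ, ξ ≠ 0 ∧
    ∀ j, j ≠ i → (facet η κ i ∩ facet η κ j).Nonempty → dotp (η j) ξ = 0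

/-- Equivalence of facets, via the criterion of Lemma 4.4. -/
def FacetEquiv {n N : ℕ} (η : Fin N → Fin n → ℝ) (i j : Fin N) : Prop :=
  i = j ∨ ∃ ξ : Fin n → ℝ, dotp (η i) ξ = 1 ∧ dotp (η j) ξ = -1 ∧
    ∀ k, k ≠ i → k ≠ j → dotp (η k) ξ = 0

def IsEquivClass {n N : ℕ} (η : Fin N → Fin n → ℝ) (I : Finset (Fin N)) : Prop :=
  I.Nonempty ∧ (∀ i ∈ I, ∀ j ∈ I, FacetEquiv η i j) ∧
    ∀ i ∈ I, ∀ j, FacetEquiv η i j → j ∈ I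

/-- H is inessential. -/
def Inessential {n N : ℕ} (η : Fin N → Fin n → ℝ) (H : Fin n → ℝ) : Prop :=
  ∃ β : Fin N → ℝ, H = ∑ i, β i • η i ∧
    ∀ I : Finset (Fin N), IsEquivClass η I → ∑ i ∈ I, β i = 0

end MassLinearPaper

open MassLinearPaper


open MassLinearPaper

namespace Stmt3Aux

open Filter Bornology
open scoped Classical


variable {N : ℕ}

/-- Iterated finite difference of `f` over the "box" spanned in the coordinates of `m`,
with bottom corner `a` and top values given by `b`. -/
def boxSum : List (Fin N) → ((Fin N → ℝ) → ℝ) → (Fin N → ℝ) → (Fin N → ℝ) → ℝ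
  | [], f, a, _ => f a
  | j :: js, f, a, b =>
      boxSum js f (Function.update a j (b j)) b - boxSum js f a b

/-- The list of corners of the box. -/
def cornerList : List (Fin N) → (Fin N → ℝ) → (Fin N → ℝ) → List (Fin N → ℝ)
  | [], a, _ => [a]
  | j :: js, a, b => cornerList js a b ++ cornerList js (Function.update a j (b j)) b

@[simp] lemma boxSum_nil (f : (Fin N → ℝ) → ℝ) (a b : Fin N → ℝ) :
    boxSum [] f a b = f a := rfl

lemma boxSum_cons (j : Fin N) (js : List (Fin N)) (f : (Fin N → ℝ) → ℝ) (a b : Fin N → ℝ) :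
    boxSum (j :: js) f a b
      = boxSum js f (Function.update a j (b j)) b - boxSum js f a b := rfl

@[simp] lemma cornerList_nil (a b : Fin N → ℝ) : cornerList ([] : List (Fin N)) a b = [a] := rfl

lemma cornerList_cons (j : Fin N) (js : List (Fin N)) (a b : Fin N → ℝ) :
    cornerList (j :: js) a b
      = cornerList js a b ++ cornerList js (Function.update a j (b j)) b := rfl

lemma self_mem_cornerList (m : List (Fin N)) (a b : Fin N → ℝ) : a ∈ cornerList m a b := by
  induction m generalizing a with
  | nil => simp
  | cons j js ih => simp [cornerList_cons]; exact Or.inl (ih a)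

lemma boxSum_congr {m : List (Fin N)} {f g : (Fin N → ℝ) → ℝ} {a b : Fin N → ℝ}
    (h : ∀ c ∈ cornerList m a b, f c = g c) : boxSum m f a b = boxSum m g a b := by
  induction m generalizing a with
  | nil => exact h a (by simp)
  | cons j js ih =>
      rw [boxSum_cons, boxSum_cons]
      rw [ih fun c hc => h c (by rw [cornerList_cons]; exact List.mem_append_right _ hc),
        ih fun c hc => h c (by rw [cornerList_cons]; exact List.mem_append_left _ hc)]

lemma boxSum_const_zero (m : List (Fin N)) (a b : Fin N → ℝ) :
    boxSum m (fun _ => (0:ℝ)) a b = 0 := by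
  induction m generalizing a with
  | nil => rfl
  | cons j js ih => rw [boxSum_cons, ih, ih, sub_zero]

lemma boxSum_sub (m : List (Fin N)) (f g : (Fin N → ℝ) → ℝ) (a b : Fin N → ℝ) :
    boxSum m (fun y => f y - g y) a b = boxSum m f a b - boxSum m g a b := by
  induction m generalizing a with
  | nil => rfl
  | cons j js ih => rw [boxSum_cons, ih, ih, boxSum_cons, boxSum_cons]; ring

lemma boxSum_div (m : List (Fin N)) (f : (Fin N → ℝ) → ℝ) (s : ℝ) (a b : Fin N → ℝ) :
    boxSum m (fun y => f y / s) a b = boxSum m f a b / s := by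
  induction m generalizing a with
  | nil => rfl
  | cons j js ih => rw [boxSum_cons, ih, ih, boxSum_cons]; ring

lemma cornerList_coord_of_not_mem {m : List (Fin N)} {a b c : Fin N → ℝ} {i : Fin N}
    (hc : c ∈ cornerList m a b) (hi : i ∉ m) : c i = a i := by
  induction m generalizing a with
  | nil => simp at hc; rw [hc]
  | cons j js ih =>
      simp only [cornerList_cons, List.mem_append] at hc
      have hij : i ≠ j := by intro h; exact hi (h ▸ List.mem_cons_self (a := j) (l := js))
      have hijs : i ∉ js := fun h => hi (List.mem_cons_of_mem _ h)
      rcases hc with hc | hc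
      · exact ih hc hijs
      · rw [ih hc hijs, Function.update_apply, if_neg hij]

lemma cornerList_coord {m : List (Fin N)} {a b c : Fin N → ℝ}
    (hc : c ∈ cornerList m a b) (i : Fin N) : c i = a i ∨ (i ∈ m ∧ c i = b i) := by
  induction m generalizing a with
  | nil => simp at hc; left; rw [hc]
  | cons j js ih =>
      simp only [cornerList_cons, List.mem_append] at hc
      rcases hc with hc | hc
      · rcases ih hc with h | ⟨h1, h2⟩
        · left; exact h
        · right; exact ⟨List.mem_cons_of_mem _ h1, h2⟩
      · rcases ih hc with h | ⟨h1, h2⟩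
        · rw [Function.update_apply] at h
          by_cases hij : i = j
          · right; exact ⟨hij ▸ List.mem_cons_self (a := j) (l := js), by rw [h, if_pos hij, hij]⟩
          · left; rw [h, if_neg hij]
        · right; exact ⟨List.mem_cons_of_mem _ h1, h2⟩

/-- corners only depend on `b` through coordinates in `m`. -/
lemma cornerList_congr_top {m : List (Fin N)} {a b b' : Fin N → ℝ}
    (h : ∀ i ∈ m, b i = b' i) : cornerList m a b = cornerList m a b' := by
  induction m generalizing a with
  | nil => rfl
  | cons j js ih =>
      rw [cornerList_cons, cornerList_cons,
        ih (fun i hi => h i (List.mem_cons_of_mem _ hi)),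
        h j (List.mem_cons_self (a := j) (l := js)),
        ih (fun i hi => h i (List.mem_cons_of_mem _ hi))]

lemma boxSum_congr_top {m : List (Fin N)} {f : (Fin N → ℝ) → ℝ} {a b b' : Fin N → ℝ}
    (h : ∀ i ∈ m, b i = b' i) : boxSum m f a b = boxSum m f a b' := by
  induction m generalizing a with
  | nil => rfl
  | cons j js ih =>
      rw [boxSum_cons, boxSum_cons, h j (List.mem_cons_self (a := j) (l := js)),
        ih (fun i hi => h i (List.mem_cons_of_mem _ hi)),
        ih (fun i hi => h i (List.mem_cons_of_mem _ hi))]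

lemma cornerList_update {m : List (Fin N)} {a b : Fin N → ℝ} {j : Fin N} (hj : j ∉ m) (t : ℝ) :
    cornerList m (Function.update a j t) b
      = (cornerList m a b).map (fun c => Function.update c j t) := by
  induction m generalizing a with
  | nil => simp
  | cons i is ih =>
      have hij : j ≠ i := by intro h; exact hj (h ▸ List.mem_cons_self (a := i) (l := is))
      have hjis : j ∉ is := fun h => hj (List.mem_cons_of_mem _ h)
      rw [cornerList_cons, cornerList_cons, List.map_append, ih hjis,
        Function.update_comm hij, ih hjis]

lemma boxSum_update {m : List (Fin N)} {f : (Fin N → ℝ) → ℝ} {a b : Fin N → ℝ} {j : Fin N}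
    (hj : j ∉ m) (t : ℝ) :
    boxSum m (fun y => f (Function.update y j t)) a b = boxSum m f (Function.update a j t) b := by
  induction m generalizing a with
  | nil => rfl
  | cons i is ih =>
      have hij : j ≠ i := by intro h; exact hj (h ▸ List.mem_cons_self (a := i) (l := is))
      have hjis : j ∉ is := fun h => hj (List.mem_cons_of_mem _ h)
      rw [boxSum_cons, boxSum_cons, ih hjis, ih hjis, Function.update_comm hij]

lemma boxSum_append_singleton {js : List (Fin N)} {j : Fin N} (hj : j ∉ js)
    (f : (Fin N → ℝ) → ℝ) (a b : Fin N → ℝ) :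
    boxSum (js ++ [j]) f a b = boxSum (j :: js) f a b := by
  induction js generalizing a with
  | nil => rfl
  | cons x t ih =>
      have hjx : j ≠ x := by intro h; exact hj (h ▸ List.mem_cons_self (a := x) (l := t))
      have hjt : j ∉ t := fun h => hj (List.mem_cons_of_mem _ h)
      rw [List.cons_append, boxSum_cons, ih hjt, ih hjt]
      rw [boxSum_cons, boxSum_cons, boxSum_cons, boxSum_cons, boxSum_cons]
      rw [Function.update_comm (Ne.symm hjx)]
      ring

lemma cornerList_append_singleton {js : List (Fin N)} {j : Fin N} (hj : j ∉ js)
    (a b : Fin N → ℝ) (c : Fin N → ℝ) :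
    c ∈ cornerList (js ++ [j]) a b ↔ c ∈ cornerList (j :: js) a b := by
  induction js generalizing a with
  | nil => exact Iff.rfl
  | cons x t ih =>
      have hjx : j ≠ x := by intro h; exact hj (h ▸ List.mem_cons_self (a := x) (l := t))
      have hjt : j ∉ t := fun h => hj (List.mem_cons_of_mem _ h)
      show c ∈ cornerList (x :: (t ++ [j])) a b ↔ _
      rw [cornerList_cons]
      simp only [List.mem_append, ih hjt]
      simp only [cornerList_cons, List.mem_append]
      rw [Function.update_comm hjx]
      tauto

lemma exists_corner_top {m : List (Fin N)} (hm : m.Nodup) {j : Fin N} (hj : j ∈ m)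
    (a b : Fin N → ℝ) : ∃ c ∈ cornerList m a b, c j = b j := by
  induction m generalizing a with
  | nil => simp at hj
  | cons x t ih =>
      rcases List.mem_cons.1 hj with h | h
      · subst h
        refine ⟨Function.update a j (b j), ?_, ?_⟩
        · rw [cornerList_cons]
          exact List.mem_append_right _ (self_mem_cornerList _ _ _)
        · simp
      · have := ih (List.Nodup.of_cons hm) h
        obtain ⟨c, hc, hcj⟩ := this a
        exact ⟨c, by rw [cornerList_cons]; exact List.mem_append_left _ hc, hcj⟩

lemma boxSum_tendsto {m : List (Fin N)} {a b : Fin N → ℝ} {α : Type*} {l : Filter α}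
    {F : α → (Fin N → ℝ) → ℝ} {G : (Fin N → ℝ) → ℝ}
    (h : ∀ c ∈ cornerList m a b, Tendsto (fun s => F s c) l (nhds (G c))) :
    Tendsto (fun s => boxSum m (F s) a b) l (nhds (boxSum m G a b)) := by
  induction m generalizing a with
  | nil => exact h a (by simp)
  | cons j js ih =>
      simp only [boxSum_cons]
      exact Tendsto.sub
        (ih fun c hc => h c (by rw [cornerList_cons]; exact List.mem_append_right _ hc))
        (ih fun c hc => h c (by rw [cornerList_cons]; exact List.mem_append_left _ hc))


lemma update_eq_add_smul_single (y : Fin N → ℝ) (j : Fin N) (s : ℝ) :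
    Function.update y j (y j + s) = y + s • (Pi.single j 1 : Fin N → ℝ) := by
  funext i
  by_cases h : i = j
  · subst h
    simp
  · simp [Function.update_apply, h, Pi.single_apply]

lemma exists_pos_forall_list {α : Type*} (L : List α) (P : α → ℝ → Prop)
    (hP : ∀ c ∈ L, ∃ ε > 0, P c ε)
    (hmono : ∀ c ε ε', 0 < ε' → ε' ≤ ε → P c ε → P c ε') :
    ∃ ε > 0, ∀ c ∈ L, P c ε := by
  induction L with
  | nil => exact ⟨1, one_pos, by simp⟩
  | cons x t ih =>
      obtain ⟨ε₁, hε₁, hx⟩ := hP x (List.mem_cons_self (a := x) (l := t))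
      obtain ⟨ε₂, hε₂, ht⟩ := ih fun c hc => hP c (List.mem_cons_of_mem _ hc)
      refine ⟨min ε₁ ε₂, lt_min hε₁ hε₂, ?_⟩
      intro c hc
      rcases List.mem_cons.1 hc with h | h
      · subst h; exact hmono c ε₁ _ (lt_min hε₁ hε₂) (min_le_left _ _) hx
      · exact hmono c ε₂ _ (lt_min hε₁ hε₂) (min_le_right _ _) (ht c h)

lemma exists_eps_line_mem {B : Set (Fin N → ℝ)} (hB : IsOpen B) {y : Fin N → ℝ} (hy : y ∈ B)
    (j : Fin N) : ∃ ε > 0, ∀ s : ℝ, |s| < ε → Function.update y j (y j + s) ∈ B := by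
  have hcont : Continuous (fun s : ℝ => y + s • (Pi.single j 1 : Fin N → ℝ)) :=
    continuous_const.add (continuous_id.smul continuous_const)
  have hopen : IsOpen ((fun s : ℝ => y + s • (Pi.single j 1 : Fin N → ℝ)) ⁻¹' B) := hB.preimage hcont
  have h0 : (0:ℝ) ∈ (fun s : ℝ => y + s • (Pi.single j 1 : Fin N → ℝ)) ⁻¹' B := by
    simp only [Set.mem_preimage, zero_smul, add_zero]; exact hy
  obtain ⟨ε, hε, hball⟩ := Metric.isOpen_iff.1 hopen 0 h0
  refine ⟨ε, hε, fun s hs => ?_⟩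
  rw [update_eq_add_smul_single]
  exact hball (by simpa [Real.dist_eq] using hs)

/-- The derivative of `h` along the `j`-th coordinate line at a differentiability point. -/
lemma hasDerivAt_line {h : (Fin N → ℝ) → ℝ} {c : Fin N → ℝ}
    (hd : DifferentiableAt ℝ h c) (j : Fin N) :
    HasDerivAt (fun s : ℝ => h (c + s • (Pi.single j 1 : Fin N → ℝ)))
      (fderiv ℝ h c (Pi.single j 1 : Fin N → ℝ)) 0 := by
  have hl : HasDerivAt (fun s : ℝ => c + s • (Pi.single j 1 : Fin N → ℝ)) ((Pi.single j 1 : Fin N → ℝ)) 0 := by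
    simpa using ((hasDerivAt_id (0:ℝ)).smul_const ((Pi.single j 1 : Fin N → ℝ))).const_add c
  have hd' : HasFDerivAt h (fderiv ℝ h c) ((fun s : ℝ => c + s • (Pi.single j 1 : Fin N → ℝ)) 0) := by
    simpa using hd.hasFDerivAt
  have := hd'.comp_hasDerivAt (x := (0:ℝ)) hl
  exact this


theorem chain_zero (m : List (Fin N)) :
    m.Nodup → ∀ B D : Set (Fin N → ℝ), IsOpen B → D ⊆ B →
    ∀ u h : (Fin N → ℝ) → ℝ,
      (∀ y ∈ B, h y = D.indicator u y) →
      (∀ a b : Fin N → ℝ, (∀ c ∈ cornerList m a b, c ∈ D) → boxSum m u a b = 0) →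
      ∀ y ∈ B, (m.foldr MassLinearPaper.pd h) y = 0 := by
  induction m using List.reverseRecOn with
  | nil =>
      intro _ B D _ hDB u h hh hVB y hy
      simp only [List.foldr_nil]
      rw [hh y hy]
      by_cases hyD : y ∈ D
      · rw [Set.indicator_of_mem hyD]
        have := hVB y y (by simpa using hyD)
        simpa using this
      · rw [Set.indicator_of_notMem hyD]
  | append_singleton ms j ih =>
      intro hnd B D hB hDB u h hh hVB y hy
      obtain ⟨hms, -, hdisj⟩ := List.nodup_append'.mp hnd
      have hjm : j ∉ ms := fun hmem => hdisj hmem (List.mem_singleton_self j)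
      rw [List.foldr_append]
      set v : Fin N → ℝ := Pi.single j 1 with hv
      set h' : (Fin N → ℝ) → ℝ := MassLinearPaper.pd j h with hh'def
      have hfold : List.foldr MassLinearPaper.pd h [j] = h' := rfl
      rw [hfold]
      -- the punctured-line property
      set Pt : (Fin N → ℝ) → Prop :=
        fun c => ∃ ε > 0, ∀ s : ℝ, s ≠ 0 → |s| < ε → Function.update c j (c j + s) ∈ D with hPt
      set D' : Set (Fin N → ℝ) :=
        {c | c ∈ B ∧ DifferentiableAt ℝ h c ∧ Pt c ∧ h' c ≠ 0} with hD'
      -- h' vanishes off D'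
      have hh' : ∀ z ∈ B, h' z = D'.indicator h' z := by
        intro z hz
        by_cases hzD : z ∈ D'
        · rw [Set.indicator_of_mem hzD]
        · rw [Set.indicator_of_notMem hzD]
          by_cases hdiff : DifferentiableAt ℝ h z
          · by_cases hpt : Pt z
            · -- then necessarily h' z = 0
              by_contra hne
              exact hzD ⟨hz, hdiff, hpt, hne⟩
            · -- case A : not punctured
              obtain ⟨εB, hεB, hεBmem⟩ := exists_eps_line_mem hB hz j
              have hex : ∀ nn : ℕ, ∃ s : ℝ, s ≠ 0 ∧ |s| < min εB (1/(nn+1)) ∧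
                  Function.update z j (z j + s) ∉ D := by
                intro nn
                by_contra hcon
                push_neg at hcon
                exact hpt ⟨min εB (1/(nn+1)),
                  lt_min hεB (by positivity), fun s hs1 hs2 => hcon s hs1 hs2⟩
              choose sq hsq0 hsqlt hsqD using hex
              have hsqsmall : ∀ nn : ℕ, |sq nn| ≤ 1/(nn+1) :=
                fun nn => le_of_lt (lt_of_lt_of_le (hsqlt nn) (min_le_right _ _))
              have hsq_tend : Tendsto sq atTop (nhds 0) := by
                apply squeeze_zero_norm hsqsmall
                exact tendsto_one_div_add_atTop_nhds_zero_nat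
              have hsq_tend' : Tendsto sq atTop (nhdsWithin 0 ({0}ᶜ : Set ℝ)) := by
                rw [tendsto_nhdsWithin_iff]
                exact ⟨hsq_tend, Filter.Eventually.of_forall fun nn => hsq0 nn⟩
              set φ : ℝ → ℝ := fun s => h (z + s • v) with hφ
              have hder : HasDerivAt φ (h' z) 0 := hasDerivAt_line hdiff j
              have hslope : Tendsto (slope φ 0) (nhdsWithin 0 ({0}ᶜ : Set ℝ))
                  (nhds (h' z)) := hasDerivAt_iff_tendsto_slope.mp hder
              have hcomp : Tendsto (fun nn => slope φ 0 (sq nn)) atTop (nhds (h' z)) :=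
                hslope.comp hsq_tend'
              have hφval : ∀ nn, φ (sq nn) = 0 := by
                intro nn
                have hmem : z + sq nn • v ∈ B := by
                  rw [← update_eq_add_smul_single]
                  exact hεBmem _ (lt_of_lt_of_le (hsqlt nn) (min_le_left _ _))
                have : z + sq nn • v ∉ D := by
                  rw [← update_eq_add_smul_single]
                  exact hsqD nn
                rw [hφ]
                simp only
                rw [hh _ hmem, Set.indicator_of_notMem this]
              have hslope_eq : ∀ nn, slope φ 0 (sq nn) = (0 - h z)/(sq nn) := by
                intro nn
                rw [slope_def_field, hφval nn, sub_zero]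
                have : φ 0 = h z := by rw [hφ]; simp
                rw [this]
              have hmul : Tendsto (fun nn => slope φ 0 (sq nn) * sq nn) atTop
                  (nhds (h' z * 0)) := hcomp.mul hsq_tend
              have hmul_eq : ∀ nn, slope φ 0 (sq nn) * sq nn = - h z := by
                intro nn
                rw [hslope_eq nn, zero_sub, div_mul_cancel₀ _ (hsq0 nn)]
              have hz0 : h z = 0 := by
                have h1 : Tendsto (fun _ : ℕ => - h z) atTop (nhds (h' z * 0)) := by
                  rw [show (fun nn : ℕ => - h z) = (fun nn => slope φ 0 (sq nn) * sq nn) from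
                    funext fun nn => (hmul_eq nn).symm]
                  exact hmul
                have := tendsto_nhds_unique h1 tendsto_const_nhds
                rw [mul_zero] at this
                linarith [this]
              have hL0 : h' z = 0 := by
                have h2 : Tendsto (fun _ : ℕ => (0:ℝ)) atTop (nhds (h' z)) := by
                  rw [show (fun _ : ℕ => (0:ℝ)) = (fun nn => slope φ 0 (sq nn)) from
                    funext fun nn => by rw [hslope_eq nn, hz0, sub_zero, zero_div]]
                  exact hcomp
                exact tendsto_nhds_unique h2 tendsto_const_nhds
              exact hL0
          · rw [hh'def]
            show fderiv ℝ h z (Pi.single j 1) = 0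
            rw [fderiv_zero_of_not_differentiableAt hdiff]
            rfl
      -- the relative box-sum property for h' on D'
      have hVB' : ∀ a b : Fin N → ℝ,
          (∀ c ∈ cornerList ms a b, c ∈ D') → boxSum ms h' a b = 0 := by
        intro a b hc
        obtain ⟨ε, hε, hεP⟩ := exists_pos_forall_list (cornerList ms a b)
          (fun c ε => ∀ s : ℝ, s ≠ 0 → |s| < ε → Function.update c j (c j + s) ∈ D)
          (fun c hcm => (hc c hcm).2.2.1)
          (fun c ε ε' hε' hle hP s hs1 hs2 => hP s hs1 (lt_of_lt_of_le hs2 hle))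
        set G : ℝ → ℝ :=
          fun s => boxSum ms (fun z => h (Function.update z j (z j + s))) a b with hG
        set F0 : ℝ := boxSum ms h a b with hF0
        -- G is constant for 0 < |s| < ε
        have hGu : ∀ s : ℝ, s ≠ 0 → |s| < ε →
            G s = boxSum ms u (Function.update a j (a j + s)) b := by
          intro s hs1 hs2
          rw [hG]
          simp only
          have step1 : boxSum ms (fun z => h (Function.update z j (z j + s))) a b
              = boxSum ms (fun z => u (Function.update z j (z j + s))) a b := by
            apply boxSum_congr
            intro c hcm
            have hmemD : Function.update c j (c j + s) ∈ D := hεP c hcm s hs1 hs2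
            rw [hh _ (hDB hmemD), Set.indicator_of_mem hmemD]
          have step2 : boxSum ms (fun z => u (Function.update z j (z j + s))) a b
              = boxSum ms (fun z => u (Function.update z j (a j + s))) a b := by
            apply boxSum_congr
            intro c hcm
            rw [cornerList_coord_of_not_mem hcm hjm]
          rw [step1, step2, boxSum_update hjm]
        have hGconst : ∀ s s' : ℝ, s ≠ 0 → |s| < ε → s' ≠ 0 → |s'| < ε → G s = G s' := by
          intro s s' hs1 hs2 hs1' hs2'
          rw [hGu s hs1 hs2, hGu s' hs1' hs2']
          set A : Fin N → ℝ := Function.update a j (a j + s') with hA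
          set Bb : Fin N → ℝ := Function.update b j (a j + s) with hBb
          have key : boxSum (j :: ms) u A Bb = 0 := by
            rw [← boxSum_append_singleton hjm]
            apply hVB
            intro c hcm
            rw [cornerList_append_singleton hjm] at hcm
            rw [cornerList_cons, List.mem_append] at hcm
            have hAj : Function.update A j (Bb j) = Function.update a j (a j + s) := by
              rw [hA, hBb]
              simp [Function.update_idem]
            rcases hcm with hcm | hcm
            · -- corners over A : shifted by s'
              have : cornerList ms A Bb = cornerList ms A b := by
                apply cornerList_congr_top
                intro i hi
                rw [hBb, Function.update_apply, if_neg (by rintro rfl; exact hjm hi)]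
              rw [this, hA, cornerList_update hjm] at hcm
              obtain ⟨c₀, hc₀, rfl⟩ := List.mem_map.1 hcm
              have hc₀j : c₀ j = a j := cornerList_coord_of_not_mem hc₀ hjm
              have := hεP c₀ hc₀ s' hs1' hs2'
              rwa [hc₀j] at this
            · rw [hAj] at hcm
              have : cornerList ms (Function.update a j (a j + s)) Bb
                  = cornerList ms (Function.update a j (a j + s)) b := by
                apply cornerList_congr_top
                intro i hi
                rw [hBb, Function.update_apply, if_neg (by rintro rfl; exact hjm hi)]
              rw [this, cornerList_update hjm] at hcm
              obtain ⟨c₀, hc₀, rfl⟩ := List.mem_map.1 hcm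
              have hc₀j : c₀ j = a j := cornerList_coord_of_not_mem hc₀ hjm
              have := hεP c₀ hc₀ s hs1 hs2
              rwa [hc₀j] at this
          rw [boxSum_cons] at key
          have hAj : Function.update A j (Bb j) = Function.update a j (a j + s) := by
            rw [hA, hBb]
            simp [Function.update_idem]
          rw [hAj] at key
          have e1 : boxSum ms u (Function.update a j (a j + s)) Bb
              = boxSum ms u (Function.update a j (a j + s)) b := by
            apply boxSum_congr_top
            intro i hi
            rw [hBb, Function.update_apply, if_neg (by rintro rfl; exact hjm hi)]
          have e2 : boxSum ms u A Bb = boxSum ms u A b := by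
            apply boxSum_congr_top
            intro i hi
            rw [hBb, Function.update_apply, if_neg (by rintro rfl; exact hjm hi)]
          rw [e1, e2, hA] at key
          linarith [key]
        -- the difference quotients of boxSum
        have hq : ∀ s : ℝ, s ≠ 0 → |s| < ε →
            boxSum ms (fun c => (h (Function.update c j (c j + s)) - h c)/s) a b
              = (G s - F0)/s := by
          intro s hs1 hs2
          rw [boxSum_div, boxSum_sub]
        -- convergence to boxSum ms h' a b
        have htq : Tendsto (fun s : ℝ => boxSum ms
            (fun c => (h (Function.update c j (c j + s)) - h c)/s) a b)
            (nhdsWithin 0 ({0}ᶜ : Set ℝ)) (nhds (boxSum ms h' a b)) := by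
          apply boxSum_tendsto
          intro c hcm
          have hdc : DifferentiableAt ℝ h c := (hc c hcm).2.1
          have hder := hasDerivAt_line hdc j
          have hslope := hasDerivAt_iff_tendsto_slope.mp hder
          apply hslope.congr'
          filter_upwards [eventually_mem_nhdsWithin] with s hs
          have hs0 : s ≠ 0 := hs
          rw [slope_def_field, update_eq_add_smul_single, sub_zero]
          simp only [zero_smul, add_zero]
        -- eventual equality with the constant quotient
        set c₀ : ℝ := G (ε/2) with hc₀def
        have hev : ∀ᶠ s in nhdsWithin 0 ({0}ᶜ : Set ℝ),
            boxSum ms (fun c => (h (Function.update c j (c j + s)) - h c)/s) a b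
              = (c₀ - F0)/s := by
          have hband : ∀ᶠ s in nhdsWithin 0 ({0}ᶜ : Set ℝ), |s| < ε := by
            apply eventually_nhdsWithin_of_eventually_nhds
            have : Metric.ball (0:ℝ) ε ∈ nhds (0:ℝ) := Metric.ball_mem_nhds 0 hε
            filter_upwards [this] with s hs
            simpa [Real.dist_eq] using hs
          filter_upwards [hband, eventually_mem_nhdsWithin] with s hsb hs0
          have hs0' : s ≠ 0 := hs0
          rw [hq s hs0' hsb]
          rw [hGconst s (ε/2) hs0' hsb (by positivity) (by rw [abs_of_pos (by positivity)]; linarith)]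
        have htq2 : Tendsto (fun s : ℝ => (c₀ - F0)/s)
            (nhdsWithin 0 ({0}ᶜ : Set ℝ)) (nhds (boxSum ms h' a b)) :=
          htq.congr' hev
        have hs_tend : Tendsto (fun s : ℝ => s) (nhdsWithin 0 ({0}ᶜ : Set ℝ)) (nhds 0) :=
          tendsto_id.mono_left nhdsWithin_le_nhds
        have hmul : Tendsto (fun s : ℝ => (c₀ - F0)/s * s)
            (nhdsWithin 0 ({0}ᶜ : Set ℝ)) (nhds (boxSum ms h' a b * 0)) :=
          htq2.mul hs_tend
        have hconst : ∀ᶠ s in nhdsWithin 0 ({0}ᶜ : Set ℝ), (c₀ - F0)/s * s = c₀ - F0 := by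
          filter_upwards [eventually_mem_nhdsWithin] with s hs0
          rw [div_mul_cancel₀ _ (hs0 : s ≠ 0)]
        have hceq : c₀ - F0 = 0 := by
          have h1 : Tendsto (fun _ : ℝ => c₀ - F0) (nhdsWithin 0 ({0}ᶜ : Set ℝ))
              (nhds (boxSum ms h' a b * 0)) := hmul.congr' hconst
          have h2 : Tendsto (fun _ : ℝ => c₀ - F0) (nhdsWithin 0 ({0}ᶜ : Set ℝ))
              (nhds (c₀ - F0)) := tendsto_const_nhds
          rw [mul_zero] at h1
          exact tendsto_nhds_unique h2 h1
        have hzero : ∀ᶠ s in nhdsWithin 0 ({0}ᶜ : Set ℝ), (c₀ - F0)/s = 0 := by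
          filter_upwards with s
          rw [hceq, zero_div]
        have h3 : Tendsto (fun _ : ℝ => (0:ℝ)) (nhdsWithin 0 ({0}ᶜ : Set ℝ))
            (nhds (boxSum ms h' a b)) := htq2.congr' hzero
        exact (tendsto_nhds_unique h3 tendsto_const_nhds).symm.trans rfl |>.symm ▸ rfl
      exact ih hms B D' hB (fun c hc => hc.1) h' h' hh' hVB' y hy

end Stmt3Aux

namespace Stmt3Geo

open Filter Bornology MassLinearPaper Stmt3Aux
open scoped Classical

variable {n N : ℕ}

lemma dotp_continuous (v : Fin n → ℝ) : Continuous (fun x : Fin n → ℝ => dotp v x) := by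
  unfold dotp
  exact continuous_finset_sum _ fun j _ => continuous_const.mul (continuous_apply j)

lemma dotp_zero_right (v : Fin n → ℝ) (x : Fin n → ℝ) (hv : v = 0) : dotp v x = 0 := by
  unfold dotp; simp [hv]

lemma dotp_add_smul (v x w : Fin n → ℝ) (s : ℝ) :
    dotp v (x + s • w) = dotp v x + s * dotp v w := by
  unfold dotp
  simp only [Pi.add_apply, Pi.smul_apply, smul_eq_mul, mul_add]
  rw [Finset.sum_add_distrib, Finset.mul_sum]
  congr 1
  apply Finset.sum_congr rfl
  intros; ring

lemma dotp_sub (v x y : Fin n → ℝ) : dotp v (x - y) = dotp v x - dotp v y := by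
  unfold dotp
  rw [← Finset.sum_sub_distrib]
  apply Finset.sum_congr rfl
  intros; simp [Pi.sub_apply]; ring

lemma dotp_self_pos {v : Fin n → ℝ} (hv : v ≠ 0) : 0 < dotp v v := by
  unfold dotp
  obtain ⟨j, hj⟩ := Function.ne_iff.1 hv
  exact Finset.sum_pos' (fun i _ => mul_self_nonneg _)
    ⟨j, Finset.mem_univ j, mul_self_pos.mpr hj⟩

lemma isClosed_polytope (η : Fin N → Fin n → ℝ) (κ : Fin N → ℝ) :
    IsClosed (polytope η κ) := by
  have : polytope η κ = ⋂ i, {x : Fin n → ℝ | dotp (η i) x ≤ κ i} := by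
    ext x; simp [polytope, Set.mem_iInter]
  rw [this]
  exact isClosed_iInter fun i => isClosed_le (dotp_continuous _) continuous_const

/-- If some `Δ(κ)` is bounded with nonempty interior, then `Δ(κ'')` is bounded for every `κ''`. -/
lemma polytope_bounded_all {η : Fin N → Fin n → ℝ} {κ : Fin N → ℝ}
    (hbd : IsBounded (polytope η κ)) (hint : (interior (polytope η κ)).Nonempty)
    (κ'' : Fin N → ℝ) : IsBounded (polytope η κ'') := by
  obtain ⟨x₀, hx₀int⟩ := hint
  have hx₀ : x₀ ∈ polytope η κ := interior_subset hx₀int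
  by_cases hall : ∀ i, η i = 0
  · have huniv : IsBounded (Set.univ : Set (Fin n → ℝ)) := by
      have : polytope η κ = Set.univ := by
        ext x
        simp only [Set.mem_univ, iff_true]
        intro i
        rw [dotp_zero_right _ _ (hall i)]
        have := hx₀ i
        rwa [dotp_zero_right _ _ (hall i)] at this
      rwa [this] at hbd
    exact huniv.subset (Set.subset_univ _)
  · push_neg at hall
    obtain ⟨i₀, hi₀⟩ := hall
    obtain ⟨ε, hε, hball⟩ := Metric.isOpen_iff.1 isOpen_interior x₀ hx₀int
    -- strict slack in directions with nonzero conormal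
    have hslack : ∀ i, η i ≠ 0 → dotp (η i) x₀ < κ i := by
      intro i hi
      set c : ℝ := ε / (2 * (‖η i‖ + 1)) with hc
      have hnorm : (0:ℝ) ≤ ‖η i‖ := norm_nonneg _
      have hcpos : 0 < c := by positivity
      have hmem : x₀ + c • η i ∈ Metric.ball x₀ ε := by
        rw [Metric.mem_ball, dist_eq_norm]
        have : x₀ + c • η i - x₀ = c • η i := by abel
        rw [this, norm_smul, Real.norm_eq_abs, abs_of_pos hcpos]
        have hne : ‖η i‖ + 1 ≠ 0 := by positivity
        calc c * ‖η i‖ ≤ c * (‖η i‖ + 1) := by nlinarith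
          _ = ε / 2 := by rw [hc]; field_simp
          _ < ε := by linarith
      have hy : x₀ + c • η i ∈ polytope η κ := interior_subset (hball hmem)
      have := hy i
      rw [show x₀ + c • η i = x₀ + c • η i from rfl, dotp_add_smul] at this
      nlinarith [dotp_self_pos hi, hcpos]
    -- scaling factor
    set T : Finset (Fin N) := Finset.univ.filter (fun i => η i ≠ 0) with hT
    have hTne : T.Nonempty := ⟨i₀, by simp [hT, hi₀]⟩
    set d : Fin N → ℝ := fun i => κ i - dotp (η i) x₀ with hd
    set M : Fin N → ℝ := fun i => κ'' i - dotp (η i) x₀ with hM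
    set t : ℝ := T.inf' hTne (fun i => d i / max (M i) 1) with ht
    have hdpos : ∀ i ∈ T, 0 < d i := by
      intro i hi
      have : η i ≠ 0 := by simpa [hT] using hi
      have := hslack i this
      simp only [hd]; linarith
    have htpos : 0 < t := by
      rw [ht, Finset.lt_inf'_iff]
      intro i hi
      have h1 := hdpos i hi
      have h2 : (0:ℝ) < max (M i) 1 := lt_of_lt_of_le one_pos (le_max_right _ _)
      positivity
    -- the rescaled point lies in the original polytope
    have hscale : ∀ x ∈ polytope η κ'', x₀ + t • (x - x₀) ∈ polytope η κ := by
      intro x hx i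
      rw [dotp_add_smul]
      by_cases hi : η i = 0
      · have e1 : dotp (η i) (x - x₀) = 0 := dotp_zero_right _ _ hi
        have e2 : dotp (η i) x₀ = 0 := dotp_zero_right _ _ hi
        have e3 := hx₀ i
        rw [e2] at e3
        rw [e1, e2]
        simpa using e3
      · have hiT : i ∈ T := by simp [hT, hi]
        have hrM : dotp (η i) (x - x₀) ≤ M i := by
          rw [dotp_sub]
          have := hx i
          simp only [hM]
          linarith
        rcases le_or_gt (dotp (η i) (x - x₀)) 0 with hr | hr
        · have : t * dotp (η i) (x - x₀) ≤ 0 := mul_nonpos_of_nonneg_of_nonpos htpos.le hr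
          have := hdpos i hiT
          simp only [hd] at this
          linarith
        · have hle1 : t ≤ d i / max (M i) 1 := by
            rw [ht]
            exact Finset.inf'_le _ hiT
          have hle2 : dotp (η i) (x - x₀) ≤ max (M i) 1 := le_trans hrM (le_max_left _ _)
          have hmaxpos : (0:ℝ) < max (M i) 1 := lt_of_lt_of_le one_pos (le_max_right _ _)
          have : t * dotp (η i) (x - x₀) ≤ (d i / max (M i) 1) * max (M i) 1 :=
            mul_le_mul hle1 hle2 hr.le (div_nonneg (hdpos i hiT).le hmaxpos.le)
          rw [div_mul_cancel₀ _ (ne_of_gt hmaxpos)] at this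
          simp only [hd] at this
          linarith
    -- conclude boundedness
    obtain ⟨R, hR⟩ := isBounded_iff_forall_norm_le.1 hbd
    apply isBounded_iff_forall_norm_le.2
    refine ⟨‖x₀‖ + (R + ‖x₀‖) / t, fun x hx => ?_⟩
    have h1 : ‖x₀ + t • (x - x₀)‖ ≤ R := hR _ (hscale x hx)
    have h2 : ‖t • (x - x₀)‖ ≤ R + ‖x₀‖ := by
      calc ‖t • (x - x₀)‖ = ‖x₀ + t • (x - x₀) - x₀‖ := by congr 1; abel
        _ ≤ ‖x₀ + t • (x - x₀)‖ + ‖x₀‖ := norm_sub_le _ _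
        _ ≤ R + ‖x₀‖ := by linarith
    have h3 : t * ‖x - x₀‖ ≤ R + ‖x₀‖ := by
      rw [norm_smul, Real.norm_eq_abs, abs_of_pos htpos] at h2
      exact h2
    have h4 : ‖x - x₀‖ ≤ (R + ‖x₀‖) / t := by
      rw [le_div_iff₀ htpos]
      linarith
    calc ‖x‖ = ‖x₀ + (x - x₀)‖ := by congr 1; abel
      _ ≤ ‖x₀‖ + ‖x - x₀‖ := norm_add_le _ _
      _ ≤ ‖x₀‖ + (R + ‖x₀‖) / t := by linarith

/-- The slab set: all constraints relaxed by `δ`, and the constraints in `l` nearly active. -/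
def Kset (η : Fin N → Fin n → ℝ) (κ' : Fin N → ℝ) (l : List (Fin N)) (δ : ℝ) :
    Set (Fin n → ℝ) :=
  {x | (∀ i, dotp (η i) x ≤ κ' i + δ) ∧ ∀ j ∈ l, κ' j - δ ≤ dotp (η j) x}

lemma isClosed_Kset (η : Fin N → Fin n → ℝ) (κ' : Fin N → ℝ) (l : List (Fin N)) (δ : ℝ) :
    IsClosed (Kset η κ' l δ) := by
  have : Kset η κ' l δ = (⋂ i, {x : Fin n → ℝ | dotp (η i) x ≤ κ' i + δ}) ∩
      (⋂ j, ⋂ (_ : j ∈ l), {x : Fin n → ℝ | κ' j - δ ≤ dotp (η j) x}) := by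
    ext x; simp [Kset, Set.mem_iInter]
  rw [this]
  exact IsClosed.inter
    (isClosed_iInter fun i => isClosed_le (dotp_continuous _) continuous_const)
    (isClosed_iInter fun j => isClosed_iInter fun _ =>
      isClosed_le continuous_const (dotp_continuous _))

lemma Kset_subset_polytope (η : Fin N → Fin n → ℝ) (κ' : Fin N → ℝ) (l : List (Fin N)) (δ : ℝ) :
    Kset η κ' l δ ⊆ polytope η (fun i => κ' i + δ) :=
  fun _ hx i => hx.1 i

lemma Kset_mono (η : Fin N → Fin n → ℝ) (κ' : Fin N → ℝ) (l : List (Fin N)) {δ δ' : ℝ}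
    (h : δ ≤ δ') : Kset η κ' l δ ⊆ Kset η κ' l δ' := by
  rintro x ⟨h1, h2⟩
  exact ⟨fun i => le_trans (h1 i) (by linarith), fun j hj => le_trans (by linarith) (h2 j hj)⟩

lemma exists_Kset_empty {η : Fin N → Fin n → ℝ} {κ' : Fin N → ℝ} {l : List (Fin N)}
    (hbd : ∀ κ'' : Fin N → ℝ, IsBounded (polytope η κ''))
    (hempty' : (⋂ i ∈ l, facet η κ' i) = ∅) :
    ∃ δ > 0, Kset η κ' l δ = ∅ := by
  have hcomp : IsCompact (Kset η κ' l 1) :=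
    Metric.isCompact_of_isClosed_isBounded (isClosed_Kset η κ' l 1)
      ((hbd _).subset (Kset_subset_polytope η κ' l 1))
  have hinter : Kset η κ' l 1 ∩ ⋂ (m : ℕ), Kset η κ' l (1/((m:ℝ)+1)) = ∅ := by
    ext x
    simp only [Set.mem_inter_iff, Set.mem_iInter, Set.mem_empty_iff_false, iff_false, not_and]
    intro _ h2
    have hle : ∀ i, dotp (η i) x ≤ κ' i := by
      intro i
      by_contra hlt
      push_neg at hlt
      obtain ⟨m, hm⟩ := exists_nat_one_div_lt (show (0:ℝ) < dotp (η i) x - κ' i by linarith)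
      have := (h2 m).1 i
      linarith
    have hge : ∀ j ∈ l, κ' j ≤ dotp (η j) x := by
      intro j hj
      by_contra hlt
      push_neg at hlt
      obtain ⟨m, hm⟩ := exists_nat_one_div_lt (show (0:ℝ) < κ' j - dotp (η j) x by linarith)
      have := (h2 m).2 j hj
      linarith
    have hxmem : x ∈ ⋂ i ∈ l, facet η κ' i := by
      apply Set.mem_iInter₂.2
      intro j hj
      exact ⟨fun i => hle i, le_antisymm (hle j) (hge j hj)⟩
    rw [hempty'] at hxmem
    exact hxmem
  obtain ⟨u, hu⟩ := hcomp.elim_finite_subfamily_closed _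
    (fun m : ℕ => isClosed_Kset η κ' l (1/((m:ℝ)+1))) hinter
  rcases u.eq_empty_or_nonempty with rfl | hne
  · refine ⟨1, one_pos, ?_⟩
    simpa using hu
  · set m0 := u.max' hne with hm0
    refine ⟨1/((m0:ℝ)+1), by positivity, ?_⟩
    rw [Set.eq_empty_iff_forall_notMem]
    intro x hx
    have hx1 : x ∈ Kset η κ' l 1 := Kset_mono η κ' l (by
      rw [div_le_one (by positivity)]
      have : (0:ℝ) ≤ (m0:ℝ) := Nat.cast_nonneg _
      linarith) hx
    have hx2 : x ∈ ⋂ m ∈ u, Kset η κ' l (1/((m:ℝ)+1)) := by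
      apply Set.mem_iInter₂.2
      intro m hm
      refine Kset_mono η κ' l ?_ hx
      apply one_div_le_one_div_of_le (by positivity)
      have : (m:ℝ) ≤ (m0:ℝ) := Nat.cast_le.2 (u.le_max' m hm)
      linarith
    have : x ∈ Kset η κ' l 1 ∩ ⋂ m ∈ u, Kset η κ' l (1/((m:ℝ)+1)) := ⟨hx1, hx2⟩
    rw [hu] at this
    exact this

/-- If the `j`-th factor is insensitive to the two levels `a j`, `b j`, the box sum vanishes. -/
lemma boxSum_zero_of_line_const {m : List (Fin N)} (hm : m.Nodup) {j : Fin N} (hj : j ∈ m)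
    {f : (Fin N → ℝ) → ℝ} {a b : Fin N → ℝ}
    (hf : ∀ y, f (Function.update y j (b j)) = f (Function.update y j (a j))) :
    boxSum m f a b = 0 := by
  induction m generalizing a with
  | nil => simp at hj
  | cons x t ih =>
      rcases List.mem_cons.1 hj with heq | hjt
      · subst heq
        have hjt' : j ∉ t := (List.nodup_cons.1 hm).1
        rw [boxSum_cons, ← boxSum_update hjt' (b j),
          show (fun y => f (Function.update y j (b j)))
            = (fun y => f (Function.update y j (a j))) from funext hf,
          boxSum_update hjt' (a j), Function.update_eq_self, sub_self]
      · have hmt : t.Nodup := (List.nodup_cons.1 hm).2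
        have hx : j ≠ x := by rintro rfl; exact ((List.nodup_cons.1 hm).1) hjt
        have hf' : ∀ y, f (Function.update y j (b j))
            = f (Function.update y j ((Function.update a x (b x)) j)) := by
          intro y
          rw [Function.update_apply, if_neg hx]
          exact hf y
        rw [boxSum_cons, ih hmt hjt hf', ih hmt hjt hf, sub_zero]

variable {η : Fin N → Fin n → ℝ}

lemma integrable_boxSum_indicator (hbd : ∀ κ'' : Fin N → ℝ, IsBounded (polytope η κ''))
    (m : List (Fin N)) (a b : Fin N → ℝ) :
    MeasureTheory.Integrable (fun x : Fin n → ℝ =>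
      boxSum m (fun κ'' => (polytope η κ'').indicator (fun _ => (1:ℝ)) x) a b) := by
  induction m generalizing a with
  | nil =>
      simp only [boxSum_nil]
      exact (integrable_indicator_iff (isClosed_polytope η a).measurableSet).2
        (integrableOn_const (hbd a).measure_lt_top.ne)
  | cons j js ih =>
      simp only [boxSum_cons]
      exact (ih _).sub (ih _)

lemma boxSum_volFn_eq_integral (hbd : ∀ κ'' : Fin N → ℝ, IsBounded (polytope η κ''))
    (m : List (Fin N)) (a b : Fin N → ℝ) :
    boxSum m (volFn η) a b
      = ∫ x, boxSum m (fun κ'' => (polytope η κ'').indicator (fun _ => (1:ℝ)) x) a b := by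
  induction m generalizing a with
  | nil =>
      simp only [boxSum_nil]
      rw [show volFn η a = (volume (polytope η a)).toReal from rfl]
      rw [MeasureTheory.integral_indicator_const (1:ℝ) (isClosed_polytope η a).measurableSet]
      simp [measureReal_def]
  | cons j js ih =>
      simp only [boxSum_cons]
      rw [ih, ih, ← MeasureTheory.integral_sub (integrable_boxSum_indicator hbd js _ b)
        (integrable_boxSum_indicator hbd js _ b)]

lemma boxSum_indicator_zero {κ' : Fin N → ℝ} {l : List (Fin N)} {δ : ℝ}
    (hnd : l.Nodup) (hK : Kset η κ' l δ = ∅) {a b : Fin N → ℝ}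
    (ha : ∀ i, |a i - κ' i| < δ) (hb : ∀ j ∈ l, |b j - κ' j| < δ) (x : Fin n → ℝ) :
    boxSum l (fun κ'' => (polytope η κ'').indicator (fun _ => (1:ℝ)) x) a b = 0 := by
  by_cases h1 : ∃ i, κ' i + δ < dotp (η i) x
  · obtain ⟨i, hi⟩ := h1
    have hzero : ∀ c ∈ cornerList l a b,
        (polytope η c).indicator (fun _ => (1:ℝ)) x = (fun _ => (0:ℝ)) c := by
      intro c hc
      apply Set.indicator_of_notMem
      intro hmem
      have hle := hmem i
      have hci : |c i - κ' i| < δ := by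
        rcases cornerList_coord hc i with h | ⟨hil, h⟩
        · rw [h]; exact ha i
        · rw [h]; exact hb i hil
      have := (abs_lt.1 hci).2
      linarith
    rw [boxSum_congr hzero, boxSum_const_zero]
  · push_neg at h1
    by_cases h2 : ∃ j ∈ l, dotp (η j) x ≤ min (a j) (b j) ∨ max (a j) (b j) < dotp (η j) x
    · obtain ⟨j, hjl, hj⟩ := h2
      apply boxSum_zero_of_line_const hnd hjl
      intro y
      have hmem : ∀ t : ℝ, x ∈ polytope η (Function.update y j t) ↔
          (dotp (η j) x ≤ t ∧ ∀ i, i ≠ j → dotp (η i) x ≤ y i) := by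
        intro t
        constructor
        · intro hm
          refine ⟨by simpa using hm j, fun i hij => ?_⟩
          have := hm i
          rwa [Function.update_apply, if_neg hij] at this
        · rintro ⟨hjt, hrest⟩ i
          rw [Function.update_apply]
          by_cases hij : i = j
          · rw [if_pos hij, hij] at *
            exact hjt
          · rw [if_neg hij]
            exact hrest i hij
      have hiff : (x ∈ polytope η (Function.update y j (b j)))
          ↔ (x ∈ polytope η (Function.update y j (a j))) := by
        rw [hmem, hmem]
        rcases hj with hj | hj
        · have hja : dotp (η j) x ≤ a j := le_trans hj (min_le_left _ _)
          have hjb : dotp (η j) x ≤ b j := le_trans hj (min_le_right _ _)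
          simp [hja, hjb]
        · have hja : ¬ dotp (η j) x ≤ a j := not_le.2 (lt_of_le_of_lt (le_max_left _ _) hj)
          have hjb : ¬ dotp (η j) x ≤ b j := not_le.2 (lt_of_le_of_lt (le_max_right _ _) hj)
          simp [hja, hjb]
      by_cases hxx : x ∈ polytope η (Function.update y j (a j))
      · rw [Set.indicator_of_mem (hiff.2 hxx), Set.indicator_of_mem hxx]
      · rw [Set.indicator_of_notMem (fun hm => hxx (hiff.1 hm)),
          Set.indicator_of_notMem hxx]
    · exfalso
      push_neg at h2
      have hxK : x ∈ Kset η κ' l δ := by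
        refine ⟨h1, fun j hj => ?_⟩
        have h2' := (h2 j hj).1
        have hbj := abs_lt.1 (hb j hj)
        have haj := abs_lt.1 (ha j)
        have hminlt : κ' j - δ < min (a j) (b j) := by
          rw [lt_min_iff]
          constructor <;> linarith [hbj.1, haj.1]
        linarith
      rw [hK] at hxK
      exact hxK

lemma isOpen_box (κ' : Fin N → ℝ) (δ : ℝ) :
    IsOpen {y : Fin N → ℝ | ∀ i, |y i - κ' i| < δ} := by
  have : {y : Fin N → ℝ | ∀ i, |y i - κ' i| < δ}
      = Set.pi Set.univ (fun i => Metric.ball (κ' i) δ) := by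
    ext y
    simp [Set.mem_pi, Metric.mem_ball, Real.dist_eq]
  rw [this]
  exact isOpen_set_pi Set.finite_univ fun i _ => Metric.isOpen_ball

end Stmt3Geo

/-- If the facets `F_{i₁},…,F_{i_k}` have empty intersection, the corresponding mixed
partial derivative of the volume vanishes on the chamber. -/
theorem stmt3 {n N : ℕ} (η : Fin N → Fin n → ℝ) (κ : Fin N → ℝ)
    (hΔ : GoodPolytope η κ) (l : List (Fin N)) (hnd : l.Nodup)
    (hempty : (⋂ i ∈ l, facet η κ i) = ∅) :
    ∀ κ' ∈ chamber η κ, (l.foldr pd (volFn η)) κ' = 0 := by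
  obtain ⟨hsim, hbd, hint, hfac⟩ := hΔ
  intro κ' hκ'
  have hκ'S := connectedComponentIn_subset
    {κ'' | IsSimplePoly η κ'' ∧ Analogous η κ κ''} κ hκ'
  have hana : Analogous η κ κ' := hκ'S.2
  have hconv : ∀ κ₀ : Fin N → ℝ,
      (⋂ i ∈ l.toFinset, facet η κ₀ i) = ⋂ i ∈ l, facet η κ₀ i := by
    intro κ₀
    ext x
    simp [List.mem_toFinset]
  have hempty' : (⋂ i ∈ l, facet η κ' i) = ∅ := by
    rw [← hconv, ← Set.not_nonempty_iff_eq_empty, hana l.toFinset,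
      Set.not_nonempty_iff_eq_empty, hconv]
    exact hempty
  have hbd' : ∀ κ'' : Fin N → ℝ, Bornology.IsBounded (polytope η κ'') :=
    Stmt3Geo.polytope_bounded_all hbd hint
  obtain ⟨δ, hδ, hK⟩ := Stmt3Geo.exists_Kset_empty hbd' hempty'
  set Box : Set (Fin N → ℝ) := {y | ∀ i, |y i - κ' i| < δ} with hBox
  have hκ'Box : κ' ∈ Box := by
    intro i
    simpa using hδ
  have hVB : ∀ a b : Fin N → ℝ,
      (∀ c ∈ Stmt3Aux.cornerList l a b, c ∈ Box) → Stmt3Aux.boxSum l (volFn η) a b = 0 := by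
    intro a b hc
    have ha : ∀ i, |a i - κ' i| < δ := hc a (Stmt3Aux.self_mem_cornerList l a b)
    have hb : ∀ j ∈ l, |b j - κ' j| < δ := by
      intro j hj
      obtain ⟨c, hcm, hcj⟩ := Stmt3Aux.exists_corner_top hnd hj a b
      rw [← hcj]
      exact hc c hcm j
    rw [Stmt3Geo.boxSum_volFn_eq_integral hbd' l a b,
      show (fun x => Stmt3Aux.boxSum l
          (fun κ'' => (polytope η κ'').indicator (fun _ => (1:ℝ)) x) a b) = fun _ => (0:ℝ)
        from funext (Stmt3Geo.boxSum_indicator_zero hnd hK ha hb)]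
    simp
  exact Stmt3Aux.chain_zero l hnd Box Box (Stmt3Geo.isOpen_box κ' δ) (subset_refl _)
    (volFn η) (volFn η)
    (fun y hy => (Set.indicator_of_mem hy (volFn η)).symm) hVB κ' hκ'Box
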